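/- Under the assumptions of the main CLT (Assumption (M1), Lipschitz f_1,…,f_M, weights satisfying (W1) and (W2)), for each fixed u ∈ ℕ the remainder term H_{u,n} := n^{−1/2} ∑_{j=0}^{u−1} ( ∑_{t=1}^{j} W_{t,j}^{(n)} − ∑_{t=n+1}^{n+j} W_{t,j}^{(n)} ), where W_{t,j}^{(n)} := ∑_{m=1}^{M} a_{t,m}^{(n)} U_{t,j,m}, converges to 0 in probability as n → ∞. -/

import Mathlib

noncomputable section
open MeasureTheory ProbabilityTheory Filter Topology

namespace PaperCLT

variable {Ω : Type} [MeasurableSpace Ω]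

abbrev Evec (k : ℕ) := EuclideanSpace ℝ (Fin k)

/-- Covariance of two real-valued random variables. -/
def cov (P : Measure Ω) (f g : Ω → ℝ) : ℝ :=
  (∫ ω, f ω * g ω ∂P) - (∫ ω, f ω ∂P) * (∫ ω, g ω ∂P)

/-- The σ-algebra generated by `Z t, Z (t-1), …`. -/
def filtr {k : ℕ} (Z : ℤ → Ω → Evec k) (t : ℤ) : MeasurableSpace Ω :=
  ⨆ i ∈ Set.Iic t, MeasurableSpace.comap (Z i) inferInstance

/-- Assumption (M1). -/
structure M1 (k : ℕ) (P : Measure Ω) (A : ℕ → Evec k →L[ℝ] Evec k)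
    (Z : ℤ → Ω → Evec k) (X : ℤ → Ω → Evec k) : Prop where
  prob : IsProbabilityMeasure P
  meas : ∀ t, Measurable (Z t)
  indep : iIndepFun Z P
  ident : ∀ t, P.map (Z t) = P.map (Z 0)
  mean_zero : (∫ ω, Z 0 ω ∂P) = 0
  sq_int : Integrable (fun ω => ‖Z 0 ω‖ ^ 2) P
  A_summable : Summable fun j => ‖A j‖
  X_eq : ∀ t ω, X t ω = ∑' j : ℕ, A j (Z (t - (j : ℤ)) ω)

/-- Martingale-difference terms `U_{t,j}`. -/
def U {k : ℕ} (P : Measure Ω) (Z : ℤ → Ω → Evec k) (X : ℤ → Ω → Evec k)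
    (f : Evec k → ℝ) (t : ℤ) (j : ℕ) : Ω → ℝ :=
  P[(fun ω => f (X t ω))|filtr Z (t - j)] - P[(fun ω => f (X t ω))|filtr Z (t - j - 1)]

/-- Weights vanish outside `{1,…,n}`. -/
def WeightsZero (M : ℕ) (a : ℕ → ℤ → Fin M → ℝ) : Prop :=
  ∀ (n : ℕ) (t : ℤ) (m : Fin M), (t < 1 ∨ (n : ℤ) < t) → a n t m = 0

/-- Condition (W1). -/
def W1 (M : ℕ) (a : ℕ → ℤ → Fin M → ℝ) (G : Fin M → Fin M → ℤ → ℝ) : Prop :=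
  ∀ (m ℓ : Fin M) (h : ℤ),
    Tendsto (fun n : ℕ =>
        (1 / (n : ℝ)) * ∑ t ∈ Finset.Icc (1 : ℤ) (n : ℤ), a n t m * a n (t + h) ℓ)
      atTop (𝓝 (G m ℓ h))

/-- Condition (W2): the maximal weight is `o(√n)`. -/
def W2 (M : ℕ) (a : ℕ → ℤ → Fin M → ℝ) : Prop :=
  ∀ ε : ℝ, 0 < ε → ∃ N : ℕ, ∀ n ≥ N, ∀ (t : ℤ) (m : Fin M), |a n t m| ≤ ε * Real.sqrt n

/-- Convergence in distribution (weak convergence of the pushforward laws). -/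
def TendstoInDistribution {α : Type} [MeasurableSpace α] [TopologicalSpace α]
    (P : Measure Ω) (S : ℕ → Ω → α) (μlim : Measure α) : Prop :=
  ∀ g : BoundedContinuousFunction α ℝ,
    Tendsto (fun n => ∫ ω, g (S n ω) ∂P) atTop (𝓝 (∫ x, g x ∂μlim))

/-- A centered Gaussian law on `ℝ^M` with covariance matrix `C`,
characterized through one-dimensional projections. -/
def IsCenteredGaussianVec {M : ℕ} (μ : Measure (Fin M → ℝ))
    (C : Matrix (Fin M) (Fin M) ℝ) : Prop :=
  IsProbabilityMeasure μ ∧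
    ∀ l : Fin M → ℝ,
      μ.map (fun x => ∑ i, l i * x i)
        = gaussianReal 0 (Real.toNNReal (∑ i, ∑ j, l i * C i j * l j))


/-- The weighted martingale-difference terms `W_{t,j}^{(n)} = ∑_m a_{t,m}^{(n)} U_{t,j,m}`. -/
def Wwt {Ω : Type} [MeasurableSpace Ω] {k M : ℕ} (P : Measure Ω)
    (Z X : ℤ → Ω → Evec k) (f : Fin M → Evec k → ℝ)
    (a : ℕ → ℤ → Fin M → ℝ) (n : ℕ) (t : ℤ) (j : ℕ) : Ω → ℝ :=
  fun ω => ∑ m : Fin M, a n t m * U P Z X (f m) t j ω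

/-- The martingale-difference array `M_{t,n}(u) = n^{-1/2} ∑_{j<u} ∑_m a_{t+j,m}^{(n)} U_{t+j,j,m}`. -/
def Mtn {Ω : Type} [MeasurableSpace Ω] {k M : ℕ} (P : Measure Ω)
    (Z X : ℤ → Ω → Evec k) (f : Fin M → Evec k → ℝ)
    (a : ℕ → ℤ → Fin M → ℝ) (u n : ℕ) (t : ℤ) : Ω → ℝ :=
  fun ω => (1 / Real.sqrt n) *
    ∑ j ∈ Finset.range u, ∑ m : Fin M, a n (t + (j : ℤ)) m * U P Z X (f m) (t + (j : ℤ)) j ω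

/-- the boundary remainder `H_{u,n}` vanishes in probability. -/
theorem statement7
    {Ω : Type} [MeasurableSpace Ω] (k M : ℕ) (P : Measure Ω)
    (A : ℕ → Evec k →L[ℝ] Evec k) (Z X : ℤ → Ω → Evec k)
    (hM1 : M1 k P A Z X)
    (f : Fin M → Evec k → ℝ) (hf : ∀ m, ∃ C : NNReal, LipschitzWith C (f m))
    (a : ℕ → ℤ → Fin M → ℝ) (G : Fin M → Fin M → ℤ → ℝ)
    (hzero : WeightsZero M a) (hW1 : W1 M a G) (hW2 : W2 M a)
    (u : ℕ) :
    TendstoInMeasure P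
      (fun (n : ℕ) ω =>
        (1 / Real.sqrt n) *
          ∑ j ∈ Finset.range u,
            ((∑ t ∈ Finset.Icc (1 : ℤ) (j : ℤ), Wwt P Z X f a n t j ω) -
              ∑ t ∈ Finset.Icc ((n : ℤ) + 1) ((n : ℤ) + (j : ℤ)), Wwt P Z X f a n t j ω))
      atTop (fun _ => (0 : ℝ)) := by
  haveI := hM1.prob
  -- the filtration σ-algebras are sub-σ-algebras of the ambient one
  have hle : ∀ s : ℤ, filtr Z s ≤ ‹MeasurableSpace Ω› := by
    intro s
    exact iSup₂_le fun i _ => (hM1.meas i).comap_le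
  -- measurability of each function in the sequence
  have hUmeas : ∀ (m : Fin M) (t : ℤ) (j : ℕ),
      AEStronglyMeasurable (U P Z X (f m) t j) P := by
    intro m t j
    exact ((stronglyMeasurable_condExp.mono (hle _)).aestronglyMeasurable).sub
      ((stronglyMeasurable_condExp.mono (hle _)).aestronglyMeasurable)
  -- coefficients tend to zero
  have c_tendsto : ∀ (t : ℤ) (m : Fin M),
      Tendsto (fun n : ℕ => (1 / Real.sqrt n) * a n t m) atTop (𝓝 0) := by
    intro t m
    rw [Metric.tendsto_atTop]
    intro ε hε
    obtain ⟨N, hN⟩ := hW2 (ε / 2) (half_pos hε)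
    refine ⟨max N 1, fun n hn => ?_⟩
    have hn1 : (1 : ℕ) ≤ n := le_trans (le_max_right N 1) hn
    have hsq : (1 : ℝ) ≤ Real.sqrt n := by
      rw [show (1 : ℝ) = Real.sqrt 1 by simp]
      exact Real.sqrt_le_sqrt (by exact_mod_cast hn1)
    have hsqpos : (0 : ℝ) < Real.sqrt n := lt_of_lt_of_le one_pos hsq
    have ha := hN n (le_trans (le_max_left N 1) hn) t m
    rw [Real.dist_eq, sub_zero, abs_mul, abs_of_pos (by positivity : (0:ℝ) < 1 / Real.sqrt n)]
    calc 1 / Real.sqrt n * |a n t m| ≤ 1 / Real.sqrt n * (ε / 2 * Real.sqrt n) := by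
          exact mul_le_mul_of_nonneg_left ha (by positivity)
      _ = ε / 2 := by field_simp
      _ < ε := half_lt_self hε
  apply tendstoInMeasure_of_tendsto_ae
  · intro n
    apply AEStronglyMeasurable.const_mul
    apply Finset.aestronglyMeasurable_fun_sum
    intro j _
    refine AEStronglyMeasurable.sub ?_ ?_ <;>
    · apply Finset.aestronglyMeasurable_fun_sum
      intro t _
      apply Finset.aestronglyMeasurable_fun_sum
      intro m _
      exact (hUmeas m t j).const_mul _
  · refine Eventually.of_forall fun ω => ?_
    -- the second boundary sum vanishes since the weights are zero for t > n
    have hz : ∀ (n : ℕ) (j : ℕ),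
        ∑ t ∈ Finset.Icc ((n : ℤ) + 1) ((n : ℤ) + (j : ℤ)), Wwt P Z X f a n t j ω = 0 := by
      intro n j
      apply Finset.sum_eq_zero
      intro t ht
      simp only [Finset.mem_Icc] at ht
      apply Finset.sum_eq_zero
      intro m _
      rw [hzero n t m (Or.inr (by linarith [ht.1]))]
      ring
    simp only [Wwt] at hz ⊢
    simp only [hz, sub_zero, Finset.mul_sum, ← mul_assoc]
    rw [show (0 : ℝ) = ∑ j ∈ Finset.range u, ∑ t ∈ Finset.Icc (1 : ℤ) (j : ℤ),
        ∑ m : Fin M, (0 : ℝ) by simp]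
    apply tendsto_finset_sum
    intro j _
    apply tendsto_finset_sum
    intro t _
    apply tendsto_finset_sum
    intro m _
    simpa using (c_tendsto t m).mul_const (U P Z X (f m) t j ω)

end PaperCLT
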